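/- If w is a geodesic word over S = {a, a⁻¹, t} for the group Ĥ, then w contains at most 7 instances of the letter t. -/

import Mathlib

/-- The three generators `a, b, t` of the virtually Heisenberg group `Ĥ`. -/
inductive VGen : Type
  | a | b | t
deriving DecidableEq

open scoped commutatorElement

/-- Relators of the virtually Heisenberg group
`Ĥ = ⟨a,b,t ∣ [a,[a,b]] = [b,[a,b]] = t² = 1, tat = b⟩`. -/
def VRels : Set (FreeGroup VGen) :=
  { ⁅FreeGroup.of VGen.a, ⁅FreeGroup.of VGen.a, FreeGroup.of VGen.b⁆⁆,
    ⁅FreeGroup.of VGen.b, ⁅FreeGroup.of VGen.a, FreeGroup.of VGen.b⁆⁆,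
    FreeGroup.of VGen.t ^ 2,
    FreeGroup.of VGen.t * FreeGroup.of VGen.a * FreeGroup.of VGen.t *
      (FreeGroup.of VGen.b)⁻¹ }

/-- The virtually Heisenberg group `Ĥ`. -/
abbrev VH : Type := PresentedGroup VRels

/-- The generator `a` of `Ĥ`. -/
def Va : VH := PresentedGroup.of VGen.a

/-- The generator `b` of `Ĥ`. -/
def Vb : VH := PresentedGroup.of VGen.b

/-- The generator `t` of `Ĥ`. -/
def Vt : VH := PresentedGroup.of VGen.t

/-- The three letters of the alphabet `S = {a, a⁻¹, t}`. -/
inductive SLetter : Type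
  | a | A | t
deriving DecidableEq

/-- The element of `Ĥ` represented by a letter of `S`. -/
def SLetter.toV : SLetter → VH
  | .a => Va
  | .A => Va⁻¹
  | .t => Vt

/-- The element of `Ĥ` represented by a word over `S`. -/
def evalS (w : List SLetter) : VH := (w.map SLetter.toV).prod

/-- The word `a^k` over `S`, for `k ∈ ℤ`. -/
def apowS (k : ℤ) : List SLetter :=
  if 0 ≤ k then List.replicate k.toNat SLetter.a else List.replicate (-k).toNat SLetter.A

/-- The word length `ℓ_S(g)` of `g ∈ Ĥ` with respect to `S`. -/
noncomputable def lenS (g : VH) : ℕ :=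
  sInf { n | ∃ w : List SLetter, evalS w = g ∧ w.length = n }

/-- A word over `S` is geodesic if its length equals the word length of the
element it represents. -/
def IsGeodesicS (w : List SLetter) : Prop := w.length = lenS (evalS w)

set_option maxHeartbeats 1000000


abbrev H3 := ℤ × ℤ × ℤ

def hmul (p q : H3) : H3 := (p.1 + q.1, p.2.1 + q.2.1, p.2.2 + q.2.2 + p.1 * q.2.1)
def hinv (p : H3) : H3 := (-p.1, -p.2.1, p.1*p.2.1 - p.2.2)
def hphi (p : H3) : H3 := (p.2.1, p.1, p.1*p.2.1 - p.2.2)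

/-- twist -/
def tw : Bool → H3 → H3
  | false, p => p
  | true, p => hphi p

structure G where
  h : H3
  e : Bool
deriving DecidableEq

namespace G

instance : Mul G := ⟨fun g k => ⟨hmul g.h (tw g.e k.h), xor g.e k.e⟩⟩
instance : One G := ⟨⟨(0,0,0), false⟩⟩
instance : Inv G := ⟨fun g => ⟨tw g.e (hinv g.h), g.e⟩⟩

theorem mul_def (g k : G) : g * k = ⟨hmul g.h (tw g.e k.h), xor g.e k.e⟩ := rfl

theorem one_def : (1 : G) = ⟨(0,0,0), false⟩ := rfl

theorem ext (a b c a' b' c' : ℤ) (e e' : Bool) (h1 : a = a') (h2 : b = b')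
    (h3 : c = c') (h4 : e = e') : (⟨(a,b,c),e⟩ : G) = ⟨(a',b',c'),e'⟩ := by
  subst h1; subst h2; subst h3; subst h4; rfl

instance : Group G where
  mul_assoc := by
    rintro ⟨⟨a1,a2,a3⟩,ea⟩ ⟨⟨b1,b2,b3⟩,eb⟩ ⟨⟨c1,c2,c3⟩,ec⟩
    cases ea <;> cases eb <;> cases ec <;>
      simp only [mul_def, tw, hmul, hphi, Bool.xor_false, Bool.xor_true, Bool.false_xor,
        Bool.true_xor, Bool.not_false, Bool.not_true] <;>
      (apply ext <;> first | rfl | ring)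
  one_mul := by
    rintro ⟨⟨a1,a2,a3⟩,ea⟩
    cases ea <;>
      simp only [mul_def, one_def, tw, hmul, hphi, Bool.false_xor] <;>
      (apply ext <;> first | rfl | ring)
  mul_one := by
    rintro ⟨⟨a1,a2,a3⟩,ea⟩
    cases ea <;>
      simp only [mul_def, one_def, tw, hmul, hphi, Bool.xor_false] <;>
      (apply ext <;> first | rfl | ring)
  inv_mul_cancel := by
    rintro ⟨⟨a1,a2,a3⟩,ea⟩
    cases ea <;>
      simp only [mul_def, one_def, tw, hmul, hphi, hinv, Inv.inv, Bool.xor_false, Bool.true_xor,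
        Bool.xor_self] <;>
      (apply ext <;> first | rfl | ring)

end G

def aG : G := ⟨(1,0,0), false⟩
def bG : G := ⟨(0,1,0), false⟩
def tG : G := ⟨(0,0,0), true⟩


def fG : VGen → G
  | .a => aG
  | .b => bG
  | .t => tG

theorem relsG : ∀ r ∈ VRels, FreeGroup.lift fG r = 1 := by
  intro r hr
  simp only [VRels, Set.mem_insert_iff, Set.mem_singleton_iff] at hr
  rcases hr with rfl|rfl|rfl|rfl <;>
    simp only [commutatorElement, commutatorElement_def, map_mul, map_inv, map_pow, FreeGroup.lift_apply_of, fG] <;> decide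

noncomputable def piG : VH →* G := PresentedGroup.toGroup relsG

theorem piG_Va : piG Va = aG := PresentedGroup.toGroup.of relsG
theorem piG_Vb : piG Vb = bG := PresentedGroup.toGroup.of relsG
theorem piG_Vt : piG Vt = tG := PresentedGroup.toGroup.of relsG
/-! ### Relations in `VH` -/

theorem rel_one {r : FreeGroup VGen} (hr : r ∈ VRels) : PresentedGroup.mk VRels r = 1 :=
  (QuotientGroup.eq_one_iff r).mpr (Subgroup.subset_normalClosure hr)

def Vz : VH := ⁅Va, Vb⁆

theorem hT2 : Vt * Vt = 1 := by
  have := rel_one (show FreeGroup.of VGen.t ^ 2 ∈ VRels by simp [VRels])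
  rw [map_pow, pow_two] at this
  exact this

theorem hTinv : Vt⁻¹ = Vt := by
  rw [inv_eq_iff_mul_eq_one]; exact hT2

theorem hTAT : Vt * Va * Vt = Vb := by
  have := rel_one (show FreeGroup.of VGen.t * FreeGroup.of VGen.a * FreeGroup.of VGen.t *
      (FreeGroup.of VGen.b)⁻¹ ∈ VRels by simp [VRels])
  rw [map_mul, map_mul, map_mul, map_inv] at this
  have h2 := mul_eq_one_iff_eq_inv.mp this
  rw [inv_inv] at h2
  exact h2

theorem hZA : Commute Va Vz := by
  have := rel_one (show ⁅FreeGroup.of VGen.a, ⁅FreeGroup.of VGen.a, FreeGroup.of VGen.b⁆⁆ ∈ VRels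
    by simp [VRels])
  rw [map_commutatorElement, map_commutatorElement] at this
  exact commutatorElement_eq_one_iff_commute.mp this

theorem hZB : Commute Vb Vz := by
  have := rel_one (show ⁅FreeGroup.of VGen.b, ⁅FreeGroup.of VGen.a, FreeGroup.of VGen.b⁆⁆ ∈ VRels
    by simp [VRels])
  rw [map_commutatorElement, map_commutatorElement] at this
  exact commutatorElement_eq_one_iff_commute.mp this

theorem aZ (c : ℤ) : Vz ^ c * Va = Va * Vz ^ c := (hZA.symm.zpow_left c).eq
theorem aZinv (c : ℤ) : Vz ^ c * Va⁻¹ = Va⁻¹ * Vz ^ c := (hZA.symm.zpow_left c).inv_right.eq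
theorem bZ (c : ℤ) : Vz ^ c * Vb ^ (y : ℤ) = Vb ^ y * Vz ^ c :=
  ((hZB.symm.zpow_left c).zpow_right y).eq

theorem conjA_one : Va * Vb * Va⁻¹ = Vz * Vb := by
  simp only [Vz, commutatorElement]; group

theorem conjA (n : ℤ) : Va * Vb ^ n * Va⁻¹ = Vz ^ n * Vb ^ n := by
  have h := map_zpow (MulAut.conj Va) Vb n
  simp only [MulAut.conj_apply] at h
  rw [h, conjA_one, (hZB.symm.mul_zpow n)]

theorem conjAinv_one : Va⁻¹ * Vb * Va = Vz⁻¹ * Vb := by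
  calc Va⁻¹ * Vb * Va = Va⁻¹ * (Vz⁻¹ * (Vz * Vb)) * Va := by group
  _ = Va⁻¹ * (Vz⁻¹ * (Va * Vb * Va⁻¹)) * Va := by rw [conjA_one]
  _ = (Va⁻¹ * Vz⁻¹) * (Va * Vb * Va⁻¹ * Va) := by group
  _ = (Vz⁻¹ * Va⁻¹) * (Va * Vb * Va⁻¹ * Va) := by rw [hZA.inv_inv.symm.eq]
  _ = Vz⁻¹ * Vb := by group

theorem conjAinv (n : ℤ) : Va⁻¹ * Vb ^ n * Va = Vz ^ (-n) * Vb ^ n := by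
  have h := map_zpow (MulAut.conj Va⁻¹) Vb n
  simp only [MulAut.conj_apply, inv_inv] at h
  rw [h, conjAinv_one, ((hZB.symm.inv_left).mul_zpow n), ← zpow_neg_one, ← zpow_mul]
  ring_nf

theorem swap_ba (n : ℤ) : Vb ^ n * Va = Va * (Vz ^ (-n) * Vb ^ n) := by
  calc Vb ^ n * Va = Va * (Va⁻¹ * Vb ^ n * Va) := by group
  _ = Va * (Vz ^ (-n) * Vb ^ n) := by rw [conjAinv]

theorem swap_ba_inv (n : ℤ) : Vb ^ n * Va⁻¹ = Va⁻¹ * (Vz ^ n * Vb ^ n) := by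
  calc Vb ^ n * Va⁻¹ = Va⁻¹ * (Va * Vb ^ n * Va⁻¹) := by group
  _ = Va⁻¹ * (Vz ^ n * Vb ^ n) := by rw [conjA]

theorem ta : Vt * Va = Vb * Vt := by
  calc Vt * Va = (Vt * Va * Vt) * Vt⁻¹ := by group
  _ = Vb * Vt⁻¹ := by rw [hTAT]
  _ = Vb * Vt := by rw [hTinv]

theorem ta_inv : Vt * Va⁻¹ = Vb⁻¹ * Vt := by
  calc Vt * Va⁻¹ = Vb⁻¹ * ((Vb * Vt) * Va⁻¹) := by group
  _ = Vb⁻¹ * ((Vt * Va) * Va⁻¹) := by rw [ta]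
  _ = Vb⁻¹ * Vt := by group

/-! ### Normal forms -/

def NF (x y c : ℤ) (ε : Bool) : VH := Va ^ x * Vb ^ y * Vz ^ c * (cond ε Vt 1)

theorem nf_mul_a_ff (x y c : ℤ) : NF x y c false * Va = NF (x+1) y (c-y) false := by
  simp only [NF, cond]
  calc Va ^ x * Vb ^ y * Vz ^ c * 1 * Va = Va ^ x * (Vb ^ y * (Vz ^ c * Va)) := by group
  _ = Va ^ x * (Vb ^ y * (Va * Vz ^ c)) := by rw [aZ]
  _ = Va ^ x * (Vb ^ y * Va) * Vz ^ c := by group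
  _ = Va ^ x * (Va * (Vz ^ (-y) * Vb ^ y)) * Vz ^ c := by rw [swap_ba]
  _ = (Va ^ x * Va) * (Vz ^ (-y) * Vb ^ y) * Vz ^ c := by group
  _ = (Va ^ x * Va) * (Vb ^ y * Vz ^ (-y)) * Vz ^ c := by rw [bZ]
  _ = (Va ^ x * Va) * Vb ^ y * (Vz ^ (-y) * Vz ^ c) := by group
  _ = Va ^ (x+1) * Vb ^ y * Vz ^ (c - y) * 1 := by
        rw [← zpow_add_one, ← zpow_add]; ring_nf; group

theorem nf_mul_ainv_ff (x y c : ℤ) : NF x y c false * Va⁻¹ = NF (x-1) y (c+y) false := by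
  simp only [NF, cond]
  calc Va ^ x * Vb ^ y * Vz ^ c * 1 * Va⁻¹ = Va ^ x * (Vb ^ y * (Vz ^ c * Va⁻¹)) := by group
  _ = Va ^ x * (Vb ^ y * (Va⁻¹ * Vz ^ c)) := by rw [aZinv]
  _ = Va ^ x * (Vb ^ y * Va⁻¹) * Vz ^ c := by group
  _ = Va ^ x * (Va⁻¹ * (Vz ^ y * Vb ^ y)) * Vz ^ c := by rw [swap_ba_inv]
  _ = (Va ^ x * Va⁻¹) * (Vz ^ y * Vb ^ y) * Vz ^ c := by group
  _ = (Va ^ x * Va⁻¹) * (Vb ^ y * Vz ^ y) * Vz ^ c := by rw [bZ]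
  _ = (Va ^ x * Va⁻¹) * Vb ^ y * (Vz ^ y * Vz ^ c) := by group
  _ = Va ^ (x-1) * Vb ^ y * Vz ^ (c + y) * 1 := by
        rw [← zpow_sub_one, ← zpow_add]; ring_nf; group

theorem nf_mul_a_tt (x y c : ℤ) : NF x y c true * Va = NF x (y+1) c true := by
  simp only [NF, cond]
  calc Va ^ x * Vb ^ y * Vz ^ c * Vt * Va = Va ^ x * Vb ^ y * Vz ^ c * (Vt * Va) := by group
  _ = Va ^ x * Vb ^ y * Vz ^ c * (Vb * Vt) := by rw [ta]
  _ = Va ^ x * Vb ^ y * (Vz ^ c * Vb ^ (1:ℤ)) * Vt := by group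
  _ = Va ^ x * Vb ^ y * (Vb ^ (1:ℤ) * Vz ^ c) * Vt := by rw [bZ]
  _ = Va ^ x * (Vb ^ y * Vb ^ (1:ℤ)) * Vz ^ c * Vt := by group
  _ = Va ^ x * Vb ^ (y+1) * Vz ^ c * Vt := by rw [← zpow_add]

theorem nf_mul_ainv_tt (x y c : ℤ) : NF x y c true * Va⁻¹ = NF x (y-1) c true := by
  simp only [NF, cond]
  calc Va ^ x * Vb ^ y * Vz ^ c * Vt * Va⁻¹ = Va ^ x * Vb ^ y * Vz ^ c * (Vt * Va⁻¹) := by group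
  _ = Va ^ x * Vb ^ y * Vz ^ c * (Vb⁻¹ * Vt) := by rw [ta_inv]
  _ = Va ^ x * Vb ^ y * (Vz ^ c * Vb ^ (-1:ℤ)) * Vt := by group
  _ = Va ^ x * Vb ^ y * (Vb ^ (-1:ℤ) * Vz ^ c) * Vt := by rw [bZ]
  _ = Va ^ x * (Vb ^ y * Vb ^ (-1:ℤ)) * Vz ^ c * Vt := by group
  _ = Va ^ x * Vb ^ (y-1) * Vz ^ c * Vt := by rw [← zpow_add]; ring_nf

theorem nf_mul_t_ff (x y c : ℤ) : NF x y c false * Vt = NF x y c true := by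
  simp only [NF, cond]; group

theorem nf_mul_t_tt (x y c : ℤ) : NF x y c true * Vt = NF x y c false := by
  simp only [NF, cond]
  calc Va ^ x * Vb ^ y * Vz ^ c * Vt * Vt = Va ^ x * Vb ^ y * Vz ^ c * (Vt * Vt) := by group
  _ = Va ^ x * Vb ^ y * Vz ^ c * 1 := by rw [hT2]

/-- every element of `VH` has a normal form -/
theorem NF_surj (g : VH) : ∃ x y c : ℤ, ∃ ε : Bool, g = NF x y c ε := by
  have key : ∀ (wf : FreeGroup VGen) (x y c : ℤ) (ε : Bool),
      ∃ x' y' c' : ℤ, ∃ ε' : Bool,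
        NF x y c ε * PresentedGroup.mk VRels wf = NF x' y' c' ε' := by
    intro wf
    induction wf using FreeGroup.induction_on with
    | C1 => intro x y c ε; exact ⟨x, y, c, ε, by simp⟩
    | of g =>
        intro x y c ε
        cases g
        · cases ε
          · exact ⟨x+1, y, c-y, false, by rw [show PresentedGroup.mk VRels (FreeGroup.of VGen.a) = Va
              from rfl, nf_mul_a_ff]⟩
          · exact ⟨x, y+1, c, true, by rw [show PresentedGroup.mk VRels (FreeGroup.of VGen.a) = Va
              from rfl, nf_mul_a_tt]⟩
        · -- generator b = t a t
          have hb : (PresentedGroup.mk VRels (FreeGroup.of VGen.b) : VH) = Vt * Va * Vt := hTAT.symm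
          cases ε
          · refine ⟨x, y + 1, c, false, ?_⟩
            rw [hb, ← mul_assoc, ← mul_assoc, nf_mul_t_ff, nf_mul_a_tt, nf_mul_t_tt]
          · refine ⟨x + 1, y, c - y, true, ?_⟩
            rw [hb, ← mul_assoc, ← mul_assoc, nf_mul_t_tt, nf_mul_a_ff, nf_mul_t_ff]
        · cases ε
          · exact ⟨x, y, c, true, by rw [show PresentedGroup.mk VRels (FreeGroup.of VGen.t) = Vt
              from rfl, nf_mul_t_ff]⟩
          · exact ⟨x, y, c, false, by rw [show PresentedGroup.mk VRels (FreeGroup.of VGen.t) = Vt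
              from rfl, nf_mul_t_tt]⟩
    | inv_of g _ =>
        intro x y c ε
        cases g
        · cases ε
          · exact ⟨x-1, y, c+y, false, by rw [map_inv, show PresentedGroup.mk VRels (FreeGroup.of VGen.a)
              = Va from rfl, nf_mul_ainv_ff]⟩
          · exact ⟨x, y-1, c, true, by rw [map_inv, show PresentedGroup.mk VRels (FreeGroup.of VGen.a)
              = Va from rfl, nf_mul_ainv_tt]⟩
        · have hb : ((PresentedGroup.mk VRels (FreeGroup.of VGen.b))⁻¹ : VH) = Vt * Va⁻¹ * Vt := by
            rw [show PresentedGroup.mk VRels (FreeGroup.of VGen.b) = Vb from rfl, ← hTAT]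
            rw [mul_inv_rev, mul_inv_rev, hTinv]
            group
          cases ε
          · refine ⟨x, y - 1, c, false, ?_⟩
            rw [map_inv, hb, ← mul_assoc, ← mul_assoc, nf_mul_t_ff, nf_mul_ainv_tt, nf_mul_t_tt]
          · refine ⟨x - 1, y, c + y, true, ?_⟩
            rw [map_inv, hb, ← mul_assoc, ← mul_assoc, nf_mul_t_tt, nf_mul_ainv_ff, nf_mul_t_ff]
        · cases ε
          · exact ⟨x, y, c, true, by rw [map_inv, show PresentedGroup.mk VRels (FreeGroup.of VGen.t) = Vt
              from rfl, hTinv, nf_mul_t_ff]⟩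
          · exact ⟨x, y, c, false, by rw [map_inv, show PresentedGroup.mk VRels (FreeGroup.of VGen.t) = Vt
              from rfl, hTinv, nf_mul_t_tt]⟩
    | mul u v ihu ihv =>
        intro x y c ε
        obtain ⟨x1, y1, c1, e1, h1⟩ := ihu x y c ε
        obtain ⟨x2, y2, c2, e2, h2⟩ := ihv x1 y1 c1 e1
        exact ⟨x2, y2, c2, e2, by rw [map_mul, ← mul_assoc, h1, h2]⟩
  obtain ⟨wf, rfl⟩ := PresentedGroup.mk_surjective VRels g
  obtain ⟨x, y, c, ε, h⟩ := key wf 0 0 0 false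
  refine ⟨x, y, c, ε, ?_⟩
  rw [← h]
  simp [NF]
/-! ### `piG` is injective -/

def zG : G := ⟨(0,0,1), false⟩

theorem piG_Vz : piG Vz = zG := by
  rw [Vz, map_commutatorElement, piG_Va, piG_Vb]; decide

theorem mul_ff_ff (a1 a2 a3 b1 b2 b3 : ℤ) :
    (⟨(a1,a2,a3), false⟩ : G) * ⟨(b1,b2,b3), false⟩
      = (⟨(a1+b1, a2+b2, a3+b3+a1*b2), false⟩ : G) := rfl

theorem aG_zpow (x : ℤ) : aG ^ x = ⟨(x,0,0), false⟩ := by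
  induction x using Int.induction_on with
  | zero => rfl
  | succ k ih => rw [zpow_add_one, ih, show aG = ⟨(1,0,0), false⟩ from rfl, mul_ff_ff]
                 apply G.ext <;> first | rfl | ring
  | pred k ih => rw [zpow_sub_one, ih, show aG⁻¹ = ⟨(-1,0,0), false⟩ from rfl, mul_ff_ff]
                 apply G.ext <;> first | rfl | ring

theorem bG_zpow (y : ℤ) : bG ^ y = ⟨(0,y,0), false⟩ := by
  induction y using Int.induction_on with
  | zero => rfl
  | succ k ih => rw [zpow_add_one, ih, show bG = ⟨(0,1,0), false⟩ from rfl, mul_ff_ff]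
                 apply G.ext <;> first | rfl | ring
  | pred k ih => rw [zpow_sub_one, ih, show bG⁻¹ = ⟨(0,-1,0), false⟩ from rfl, mul_ff_ff]
                 apply G.ext <;> first | rfl | ring

theorem zG_zpow (c : ℤ) : zG ^ c = ⟨(0,0,c), false⟩ := by
  induction c using Int.induction_on with
  | zero => rfl
  | succ k ih => rw [zpow_add_one, ih, show zG = ⟨(0,0,1), false⟩ from rfl, mul_ff_ff]
                 apply G.ext <;> first | rfl | ring
  | pred k ih => rw [zpow_sub_one, ih, show zG⁻¹ = ⟨(0,0,-1), false⟩ from rfl, mul_ff_ff]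
                 apply G.ext <;> first | rfl | ring

theorem piG_NF (x y c : ℤ) (ε : Bool) : piG (NF x y c ε) = ⟨(x, y, x*y + c), ε⟩ := by
  have h1 : piG (Va ^ x * Vb ^ y * Vz ^ c) = ⟨(x, y, x*y + c), false⟩ := by
    rw [map_mul, map_mul, map_zpow, map_zpow, map_zpow, piG_Va, piG_Vb, piG_Vz,
      aG_zpow, bG_zpow, zG_zpow, mul_ff_ff, mul_ff_ff]
    apply G.ext <;> first | rfl | ring
  cases ε
  · simp only [NF, cond, mul_one, h1]
  · simp only [NF, cond, map_mul, h1, piG_Vt]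
    rw [show tG = ⟨(0,0,0), true⟩ from rfl, G.mul_def]
    apply G.ext <;> first | rfl | (simp [hmul, tw]; try ring)

theorem piG_inj : Function.Injective piG := by
  intro g g' h
  obtain ⟨x, y, c, ε, rfl⟩ := NF_surj g
  obtain ⟨x', y', c', ε', rfl⟩ := NF_surj g'
  rw [piG_NF, piG_NF] at h
  have h1 : x = x' ∧ (y = y' ∧ x*y + c = x'*y' + c') ∧ ε = ε' := by
    have h2 : (⟨(x, y, x * y + c), ε⟩ : G).h.1 = (⟨(x', y', x' * y' + c'), ε'⟩ : G).h.1 := by rw [h]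
    have h3 : (⟨(x, y, x * y + c), ε⟩ : G).h.2.1 = (⟨(x', y', x' * y' + c'), ε'⟩ : G).h.2.1 := by rw [h]
    have h4 : (⟨(x, y, x * y + c), ε⟩ : G).h.2.2 = (⟨(x', y', x' * y' + c'), ε'⟩ : G).h.2.2 := by rw [h]
    have h5 : (⟨(x, y, x * y + c), ε⟩ : G).e = (⟨(x', y', x' * y' + c'), ε'⟩ : G).e := by rw [h]
    exact ⟨h2, ⟨h3, h4⟩, h5⟩
  obtain ⟨rfl, ⟨rfl, h3⟩, rfl⟩ := h1
  have : c = c' := by nlinarith [h3]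
  rw [this]
/-! ### Evaluation in `G`, blocks -/

def fSG : SLetter → G
  | .a => aG
  | .A => aG⁻¹
  | .t => tG

def evalG (w : List SLetter) : G := (w.map fSG).prod

theorem piG_evalS (w : List SLetter) : piG (evalS w) = evalG w := by
  induction w with
  | nil => simp [evalS, evalG]
  | cons l w ih =>
      simp only [evalS, evalG, List.map_cons, List.prod_cons, map_mul] at *
      rw [ih]
      congr 1
      cases l
      · exact piG_Va
      · rw [SLetter.toV, map_inv, piG_Va]; rfl
      · exact piG_Vt

def Apow (p : ℤ) : G := ⟨(p,0,0), false⟩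

theorem Apow_aG (p : ℤ) : Apow (p + 1) = aG * Apow p := by
  rw [show aG = (⟨(1,0,0), false⟩ : G) from rfl, Apow, Apow, mul_ff_ff]
  apply G.ext <;> first | rfl | ring

theorem Apow_aGinv (p : ℤ) : Apow (p - 1) = aG⁻¹ * Apow p := by
  rw [show aG⁻¹ = (⟨(-1,0,0), false⟩ : G) from rfl, Apow, Apow, mul_ff_ff]
  apply G.ext <;> first | rfl | ring

def blocks : List SLetter → List ℤ
  | [] => [0]
  | .a :: w => match blocks w with
      | [] => [1]
      | p :: P => (p+1) :: P
  | .A :: w => match blocks w with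
      | [] => [-1]
      | p :: P => (p-1) :: P
  | .t :: w => 0 :: blocks w

theorem blocks_ne_nil (w : List SLetter) : blocks w ≠ [] := by
  induction w with
  | nil => simp [blocks]
  | cons l w ih =>
      cases l <;> simp only [blocks]
      · rcases h : blocks w with _ | ⟨p, P⟩ <;> simp
      · rcases h : blocks w with _ | ⟨p, P⟩ <;> simp
      · simp

def gval : List ℤ → G
  | [] => 1
  | [p] => Apow p
  | p :: P => Apow p * tG * gval P

theorem gval_cons (p : ℤ) (P : List ℤ) (h : P ≠ []) :
    gval (p :: P) = Apow p * tG * gval P := by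
  rcases P with _ | ⟨q, Q⟩
  · exact absurd rfl h
  · rfl

theorem aG_gval (p : ℤ) (P : List ℤ) : aG * gval (p :: P) = gval ((p+1) :: P) := by
  rcases P with _ | ⟨q, Q⟩
  · show aG * Apow p = Apow (p+1); rw [Apow_aG]
  · show aG * (Apow p * tG * gval (q :: Q)) = Apow (p+1) * tG * gval (q :: Q)
    rw [Apow_aG]; group

theorem aGinv_gval (p : ℤ) (P : List ℤ) : aG⁻¹ * gval (p :: P) = gval ((p-1) :: P) := by
  rcases P with _ | ⟨q, Q⟩
  · show aG⁻¹ * Apow p = Apow (p-1); rw [Apow_aGinv]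
  · show aG⁻¹ * (Apow p * tG * gval (q :: Q)) = Apow (p-1) * tG * gval (q :: Q)
    rw [Apow_aGinv]; group

theorem evalG_blocks (w : List SLetter) : evalG w = gval (blocks w) := by
  induction w with
  | nil =>
      show (1 : G) = Apow 0
      apply G.ext <;> rfl
  | cons l w ih =>
      have hcons : evalG (l :: w) = fSG l * evalG w := by
        simp [evalG, List.map_cons, List.prod_cons]
      rw [hcons, ih]
      cases l
      · rcases h : blocks w with _ | ⟨p, P⟩
        · exact absurd h (blocks_ne_nil w)
        · simp only [blocks, fSG, h]
          exact aG_gval p P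
      · rcases h : blocks w with _ | ⟨p, P⟩
        · exact absurd h (blocks_ne_nil w)
        · simp only [blocks, fSG, h]
          exact aGinv_gval p P
      · simp only [blocks, fSG]
        rw [gval_cons 0 (blocks w) (blocks_ne_nil w)]
        have : Apow 0 = 1 := by apply G.ext <;> rfl
        rw [this, one_mul]

/-! ### evens, odds, `cc` -/

mutual
  def evens : List ℤ → List ℤ
    | [] => []
    | p :: P => p :: odds P
  def odds : List ℤ → List ℤ
    | [] => []
    | _ :: P => evens P
end

def cc : List ℤ → List ℤ → ℤ
  | [], _ => 0
  | e :: E, O => e * O.sum + cc E O.tail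

theorem cc_nil_right (E : List ℤ) : cc E [] = 0 := by
  induction E with
  | nil => rfl
  | cons e E ih => simp [cc, ih]

theorem cc_abel : ∀ n (E O : List ℤ), E.length + O.length ≤ n →
    cc E O + cc O E.tail = E.sum * O.sum := by
  intro n
  induction n with
  | zero =>
      intro E O h
      have hE : E = [] := by cases E <;> simp_all
      have hO : O = [] := by cases O <;> simp_all
      subst hE; subst hO; simp [cc]
  | succ n ih =>
      intro E O h
      rcases E with _ | ⟨e, E'⟩
      · simp [cc, cc_nil_right]
      · have hlen : O.length + E'.length ≤ n := by
          simp only [List.length_cons] at h; omega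
        have key := ih O E' hlen
        simp only [cc, List.tail_cons, List.sum_cons]
        have : cc O E' = E'.sum * O.sum - cc E' O.tail := by linarith [key]
        rw [this]; ring

theorem cc_abel' (E O : List ℤ) : cc E O + cc O E.tail = E.sum * O.sum :=
  cc_abel (E.length + O.length) E O le_rfl

def Xb (P : List ℤ) : ℤ := (evens P).sum
def Yb (P : List ℤ) : ℤ := (odds P).sum
def Cb (P : List ℤ) : ℤ := cc (evens P) (odds P)

def parb : List ℤ → Bool
  | [] => true
  | _ :: P => !parb P

theorem gval_eq : ∀ (P : List ℤ), P ≠ [] → gval P = ⟨(Xb P, Yb P, Cb P), parb P⟩ := by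
  intro P
  induction P with
  | nil => intro h; exact absurd rfl h
  | cons p P ih =>
      intro _
      rcases P with _ | ⟨q, Q⟩
      · show Apow p = _
        simp only [Xb, Yb, Cb, parb, evens, odds, cc, List.sum_cons, List.sum_nil]
        apply G.ext <;> first | rfl | (show p = p + 0; ring) | simp
      · rw [gval_cons p _ (by simp), ih (by simp)]
        have habel := cc_abel' (evens (q :: Q)) (odds (q :: Q))
        show Apow p * tG * _ = _
        rw [G.mul_def, G.mul_def]
        apply G.ext
        · show p + 0 + _ = Xb (p :: q :: Q)
          simp only [Xb, Yb, evens, odds, tw, hmul, hphi, Apow, tG]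
          simp
        · show 0 + _ = Yb (p :: q :: Q)
          simp only [Xb, Yb, evens, odds, tw, hmul, hphi, Apow, tG]
          simp
        · show _ = Cb (p :: q :: Q)
          simp only [Xb, Yb, Cb, evens, odds, tw, hmul, hphi, Apow, tG, cc, List.tail_cons,
            List.sum_cons]
          have h2 : cc (odds (q :: Q)) (evens (q :: Q)).tail
              = (evens (q :: Q)).sum * (odds (q :: Q)).sum - cc (evens (q :: Q)) (odds (q :: Q)) := by
            linarith [habel]
          simp only [evens, odds, List.tail_cons] at h2 ⊢
          rw [h2]
          simp only [Bool.false_xor, Bool.xor_false, cc, List.sum_cons, List.tail_cons]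
          ring
        · show xor (xor false tG.e) (parb (q :: Q)) = parb (p :: q :: Q)
          simp [parb, tG]
/-! ### Bounds -/

def absum (l : List ℤ) : ℤ := (l.map (fun z => |z|)).sum

def Mx : List ℤ → ℤ
  | [] => 0
  | e :: E => max 0 (e + Mx E)

def mn : List ℤ → ℤ
  | [] => 0
  | e :: E => min 0 (e + mn E)

theorem Mx_nonneg (E : List ℤ) : 0 ≤ Mx E := by
  cases E with
  | nil => simp [Mx]
  | cons e E => simp [Mx]

theorem mn_nonpos (E : List ℤ) : mn E ≤ 0 := by
  cases E with
  | nil => simp [mn]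
  | cons e E => simp [mn]

theorem Mx_ge_sum (E : List ℤ) : E.sum ≤ Mx E := by
  induction E with
  | nil => simp [Mx]
  | cons e E ih => simp only [Mx, List.sum_cons, le_max_iff]; right; linarith

theorem mn_le_sum (E : List ℤ) : mn E ≤ E.sum := by
  induction E with
  | nil => simp [mn]
  | cons e E ih => simp only [mn, List.sum_cons, min_le_iff]; right; linarith

theorem absum_nonneg (l : List ℤ) : 0 ≤ absum l := by
  induction l with
  | nil => simp [absum]
  | cons e l ih =>
      simp only [absum, List.map_cons, List.sum_cons] at *
      have := abs_nonneg e
      linarith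

theorem abs_sum_le_absum (l : List ℤ) : |l.sum| ≤ absum l := by
  induction l with
  | nil => simp [absum]
  | cons e l ih =>
      simp only [absum, List.map_cons, List.sum_cons] at *
      calc |e + l.sum| ≤ |e| + |l.sum| := abs_add_le _ _
      _ ≤ |e| + (l.map (fun z => |z|)).sum := by linarith

def dd : List ℤ → List ℤ → ℤ → ℤ
  | _, [], _ => 0
  | [], o :: O, s => o * s + dd [] O s
  | e :: E, o :: O, s => o * (s + e) + dd E O (s + e)

theorem dd_nil_left : ∀ (O : List ℤ) (s : ℤ), dd [] O s = s * O.sum := by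
  intro O
  induction O with
  | nil => intro s; simp [dd]
  | cons o O ih => intro s; simp only [dd, List.sum_cons, ih]; ring

theorem cc_dd : ∀ (E O : List ℤ) (s : ℤ), dd E O s = cc E O + s * O.sum := by
  intro E
  induction E with
  | nil => intro O s; simp [dd_nil_left, cc]
  | cons e E ih =>
      intro O s
      cases O with
      | nil => simp [dd, cc_nil_right]
      | cons o O =>
          simp only [dd, cc, List.sum_cons, List.tail_cons, ih]
          ring

theorem QB : ∀ (E O : List ℤ) (s mb Mb : ℤ), O.length ≤ E.length →
    mb ≤ s + mn E → s + Mx E ≤ Mb →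
    2 * dd E O s ≤ (absum O + O.sum) * Mb - (absum O - O.sum) * mb := by
  intro E
  induction E with
  | nil =>
      intro O s mb Mb hlen _ _
      have hO : O = [] := by cases O <;> simp_all
      subst hO
      simp [dd, absum]
  | cons e E ih =>
      intro O s mb Mb hlen hmb hMb
      cases O with
      | nil =>
          simp only [absum, List.map_nil, List.sum_nil, dd]
          simp
      | cons o O =>
          have hmb' : mb ≤ (s + e) + mn E := by
            have h1 : min 0 (e + mn E) ≤ e + mn E := min_le_right _ _
            simp only [mn] at hmb; linarith
          have hMb' : (s + e) + Mx E ≤ Mb := by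
            have h1 : e + Mx E ≤ max 0 (e + Mx E) := le_max_right _ _
            simp only [Mx] at hMb; linarith
          have hse1 : mb ≤ s + e := by
            have := mn_nonpos E; linarith
          have hse2 : s + e ≤ Mb := by
            have := Mx_nonneg E; linarith
          have hlen' : O.length ≤ E.length := by simp at hlen; omega
          have key := ih O (s + e) mb Mb hlen' hmb' hMb'
          simp only [dd, absum, List.map_cons, List.sum_cons]
          simp only [absum] at key
          rcases abs_cases o with ⟨h1, h2⟩ | ⟨h1, h2⟩
          · have : 2 * o * (s + e) ≤ 2 * o * Mb :=
              mul_le_mul_of_nonneg_left hse2 (by linarith)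
            nlinarith [key]
          · have : 2 * (-o) * mb ≤ 2 * (-o) * (s + e) :=
              mul_le_mul_of_nonneg_left hse1 (by linarith)
            nlinarith [key]

theorem TVB : ∀ E : List ℤ, 2 * Mx E - 2 * mn E - |E.sum| ≤ absum E := by
  intro E
  induction E with
  | nil => simp [Mx, mn, absum]
  | cons e E ih =>
      simp only [Mx, mn, absum, List.map_cons, List.sum_cons]
      simp only [absum] at ih
      have f1 := Mx_nonneg E
      have f2 := mn_nonpos E
      have f3 := Mx_ge_sum E
      have f4 := mn_le_sum E
      rcases max_cases 0 (e + Mx E) with ⟨hM, hM'⟩ | ⟨hM, hM'⟩ <;>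
        rcases min_cases 0 (e + mn E) with ⟨hm, hm'⟩ | ⟨hm, hm'⟩ <;>
        rw [hM, hm] <;>
        rcases abs_cases e with ⟨h1, h2⟩ | ⟨h1, h2⟩ <;>
        rcases abs_cases (e + E.sum) with ⟨h3, h4⟩ | ⟨h3, h4⟩ <;>
        rcases abs_cases E.sum with ⟨h5, h6⟩ | ⟨h5, h6⟩ <;>
        linarith

theorem cbound_upper (E O : List ℤ) (hlen : O.length ≤ E.length) (hx : 0 ≤ E.sum) :
    4 * cc E O ≤ 2 * (absum O + O.sum) * E.sum
      + (absum O + |O.sum|) * (absum E - E.sum) := by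
  have hq := QB E O 0 (mn E) (Mx E) hlen (by simp) (by simp)
  rw [cc_dd] at hq
  simp only [zero_mul, add_zero] at hq
  have hMs := Mx_ge_sum E
  have hmn := mn_nonpos E
  have htv := TVB E
  rw [abs_of_nonneg hx] at htv
  have hB := abs_sum_le_absum O
  have hBa := abs_nonneg O.sum
  have k1 : 0 ≤ absum O + |O.sum| := by linarith [absum_nonneg O]
  have e1 : (absum O + O.sum) * (Mx E - E.sum) ≤ (absum O + |O.sum|) * (Mx E - E.sum) := by
    apply mul_le_mul_of_nonneg_right _ (by linarith)
    have := le_abs_self O.sum; linarith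
  have e2 : (absum O - O.sum) * (- mn E) ≤ (absum O + |O.sum|) * (- mn E) := by
    apply mul_le_mul_of_nonneg_right _ (by linarith)
    have := neg_abs_le O.sum; linarith
  have e3 : (absum O + |O.sum|) * (2 * (Mx E - E.sum) + 2 * (- mn E))
      ≤ (absum O + |O.sum|) * (absum E - E.sum) := by
    apply mul_le_mul_of_nonneg_left _ k1
    linarith
  nlinarith [hq, e1, e2, e3]

theorem sum_map_neg (l : List ℤ) : (l.map (fun z => -z)).sum = - l.sum := by
  induction l with
  | nil => simp
  | cons e l ih => simp [ih]; ring

theorem cc_neg_right (E O : List ℤ) : cc E (O.map (fun z => -z)) = - cc E O := by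
  induction E generalizing O with
  | nil => simp [cc]
  | cons e E ih =>
      simp only [cc, sum_map_neg]
      rw [← List.map_tail, ih]
      ring

theorem cbound_lower (E O : List ℤ) (hlen : O.length ≤ E.length) (hx : 0 ≤ E.sum) :
    - (4 * cc E O) ≤ 2 * (absum O - O.sum) * E.sum
      + (absum O + |O.sum|) * (absum E - E.sum) := by
  have h := cbound_upper E (O.map (fun z => -z)) (by simpa using hlen) hx
  rw [cc_neg_right] at h
  simp only [sum_map_neg] at h
  have habs : absum (O.map (fun z => -z)) = absum O := by
    simp only [absum, List.map_map]
    congr 1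
    apply List.map_congr_left
    intro z _
    simp [abs_neg]
  rw [habs] at h
  rw [abs_neg] at h
  linarith
/-! ### Coverage -/

theorem COV (x y al be E : ℤ) (hx : 0 ≤ x) (hy : 0 ≤ y) (ha : 0 ≤ al) (hb : 0 ≤ be)
    (hE0 : 0 ≤ E) (hE : E ≤ al*y + be*x + al*be) :
    ∃ u v n e : ℤ, 0 ≤ u ∧ u ≤ al ∧ 0 ≤ v ∧ v ≤ be ∧ 0 ≤ n ∧ n ≤ y + v ∧ 0 ≤ e ∧ e ≤ x + u ∧
      E = u*y + v*x + u*v - n*e := by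
  rcases eq_or_lt_of_le hE0 with h0 | hpos
  · exact ⟨0,0,0,0, le_rfl, ha, le_rfl, hb, le_rfl, by linarith, le_rfl, by linarith,
      by rw [← h0]; ring⟩
  rcases le_or_gt E (al*y) with hcase | hcase
  · have hy1 : 1 ≤ y := by
      rcases eq_or_lt_of_le hy with h | h
      · exfalso; rw [← h, mul_zero] at hcase; linarith
      · omega
    set q := (E + y - 1) / y with hqdef
    have hdm := Int.mul_ediv_add_emod (E + y - 1) y
    have hr0 : 0 ≤ (E + y - 1) % y := Int.emod_nonneg _ (by omega)
    have hr1 : (E + y - 1) % y < y := Int.emod_lt_of_pos _ (by omega)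
    have hq1 : E ≤ y * q := by rw [← hqdef] at hdm; linarith
    have hq2 : y * q ≤ E + y - 1 := by rw [← hqdef] at hdm; linarith
    have hqle : q ≤ al := by
      by_contra hcon
      push_neg at hcon
      have h2 : y * (al + 1) ≤ y * q := mul_le_mul_of_nonneg_left (by omega) (by omega)
      nlinarith
    have hq0 : 1 ≤ q := by
      by_contra hcon
      push_neg at hcon
      have h2 : y * q ≤ 0 := mul_nonpos_of_nonneg_of_nonpos (by omega) (by omega)
      linarith
    refine ⟨q, 0, y*q - E, 1, by omega, hqle, le_rfl, hb, by linarith, by linarith,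
      by omega, by omega, by ring⟩
  · have hxa : 1 ≤ x + al := by
      by_contra h
      push_neg at h
      have hx0 : x = 0 := by omega
      have ha0 : al = 0 := by omega
      subst hx0; subst ha0
      simp at hcase hE
      linarith
    set d := x + al with hddef
    set F := E - al*y with hFdef
    have hF0 : 0 < F := by omega
    have hFle : F ≤ be * d := by
      have : be * d = be*x + al*be := by rw [hddef]; ring
      omega
    set v := (F + d - 1) / d with hvdef
    have hdm := Int.mul_ediv_add_emod (F + d - 1) d
    have hr0 : 0 ≤ (F + d - 1) % d := Int.emod_nonneg _ (by omega)
    have hr1 : (F + d - 1) % d < d := Int.emod_lt_of_pos _ (by omega)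
    have hv1 : F ≤ d * v := by rw [← hvdef] at hdm; linarith
    have hv2 : d * v ≤ F + d - 1 := by rw [← hvdef] at hdm; linarith
    have hvle : v ≤ be := by
      by_contra hcon
      push_neg at hcon
      have h2 : d * (be + 1) ≤ d * v := mul_le_mul_of_nonneg_left (by omega) (by omega)
      nlinarith
    have hv0 : 1 ≤ v := by
      by_contra hcon
      push_neg at hcon
      have h2 : d * v ≤ 0 := mul_nonpos_of_nonneg_of_nonpos (by omega) (by omega)
      linarith
    have hcm : v * d = d * v := mul_comm _ _
    refine ⟨al, v, 1, al*y + v*d - E, ha, le_rfl, by omega, hvle, by omega, by omega,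
      by linarith, ?_, ?_⟩
    · have h9 : al*y + v*d - E = d * v - F := by rw [hFdef, hcm]; ring
      rw [h9, ← hddef]
      linarith
    · rw [hddef]; ring

theorem cover_pos (x y c al be : ℤ) (hx : 0 ≤ x) (hy : 0 ≤ y) (ha : 0 ≤ al) (hb : 0 ≤ be)
    (hlo : -(be*x + al*y + al*be) ≤ c) (hhi : c ≤ x*y + be*x + al*y + al*be) :
    ∃ P : List ℤ, P ≠ [] ∧ P.length ≤ 7 ∧ Xb P = x ∧ Yb P = y ∧ Cb P = c ∧
      absum (evens P) ≤ x + 2*al ∧ absum (odds P) ≤ y + 2*be := by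
  rcases lt_or_ge (x*y) c with hc1 | hc1
  · -- c > x*y : family F
    obtain ⟨u, v, n, e, hu0, hu1, hv0, hv1, hn0, hn1, he0, he1, heq⟩ :=
      COV x y al be (c - x*y) hx hy ha hb (by linarith) (by linarith)
    refine ⟨[0, -v, x+u-e, n, e, y+v-n, -u], by simp, by simp, ?_, ?_, ?_, ?_, ?_⟩
    · simp only [Xb, evens, odds, List.sum_cons, List.sum_nil]; ring
    · simp only [Yb, evens, odds, List.sum_cons, List.sum_nil]; ring
    · simp only [Cb, evens, odds, cc, List.sum_cons, List.sum_nil, List.tail_cons]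
      linear_combination -heq
    · simp only [evens, odds, absum, List.map_cons, List.map_nil, List.sum_cons, List.sum_nil]
      rw [abs_of_nonneg (le_refl (0:ℤ)), abs_of_nonneg (by linarith : (0:ℤ) ≤ x+u-e),
        abs_of_nonneg he0, abs_neg, abs_of_nonneg hu0]
      linarith
    · simp only [evens, odds, absum, List.map_cons, List.map_nil, List.sum_cons, List.sum_nil]
      rw [abs_neg, abs_of_nonneg hv0, abs_of_nonneg hn0,
        abs_of_nonneg (by linarith : (0:ℤ) ≤ y+v-n)]
      linarith
  · rcases le_or_gt 0 c with hc2 | hc2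
    · -- 0 ≤ c ≤ x*y : staircase
      rcases eq_or_lt_of_le hx with hx0 | hx0
      · -- x = 0
        have hc0 : c = 0 := by nlinarith
        refine ⟨[0, y], by simp, by simp, ?_, ?_, ?_, ?_, ?_⟩
        · simp only [Xb, evens, odds, List.sum_cons, List.sum_nil]; omega
        · simp only [Yb, evens, odds, List.sum_cons, List.sum_nil]; ring
        · simp only [Cb, evens, odds, cc, List.sum_cons, List.sum_nil, List.tail_cons]
          omega
        · simp only [evens, odds, absum, List.map_cons, List.map_nil, List.sum_cons,
            List.sum_nil]
          simp; linarith
        · simp only [evens, odds, absum, List.map_cons, List.map_nil, List.sum_cons,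
            List.sum_nil]
          rw [abs_of_nonneg hy]; linarith
      · rcases eq_or_lt_of_le hc1 with hcxy | hcxy
        · -- c = x*y
          refine ⟨[x, y], by simp, by simp, ?_, ?_, ?_, ?_, ?_⟩
          · simp only [Xb, evens, odds, List.sum_cons, List.sum_nil]; ring
          · simp only [Yb, evens, odds, List.sum_cons, List.sum_nil]; ring
          · simp only [Cb, evens, odds, cc, List.sum_cons, List.sum_nil, List.tail_cons]
            linear_combination -hcxy
          · simp only [evens, odds, absum, List.map_cons, List.map_nil, List.sum_cons,
              List.sum_nil]
            rw [abs_of_nonneg hx]; linarith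
          · simp only [evens, odds, absum, List.map_cons, List.map_nil, List.sum_cons,
              List.sum_nil]
            rw [abs_of_nonneg hy]; linarith
        · -- 0 ≤ c < x*y
          set qq := c / x with hqdef
          have hdm := Int.mul_ediv_add_emod c x
          have hr0 : 0 ≤ c % x := Int.emod_nonneg _ (by omega)
          have hr1 : c % x < x := Int.emod_lt_of_pos _ (by omega)
          have hqq0 : 0 ≤ qq := Int.ediv_nonneg hc2 (by omega)
          have hqqy : qq ≤ y - 1 := by
            by_contra hcon
            push_neg at hcon
            have h2 : x * y ≤ x * qq := mul_le_mul_of_nonneg_left (by omega) (by omega)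
            rw [← hqdef] at hdm
            linarith
          refine ⟨[0, y-1-qq, c % x, 1, x - c % x, qq], by simp, by simp, ?_, ?_, ?_, ?_, ?_⟩
          · simp only [Xb, evens, odds, List.sum_cons, List.sum_nil]; ring
          · simp only [Yb, evens, odds, List.sum_cons, List.sum_nil]; ring
          · simp only [Cb, evens, odds, cc, List.sum_cons, List.sum_nil, List.tail_cons]
            rw [← hqdef] at hdm
            linear_combination hdm
          · simp only [evens, odds, absum, List.map_cons, List.map_nil, List.sum_cons,
              List.sum_nil]
            rw [abs_of_nonneg (le_refl (0:ℤ)), abs_of_nonneg hr0,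
              abs_of_nonneg (by linarith : (0:ℤ) ≤ x - c % x)]
            linarith
          · simp only [evens, odds, absum, List.map_cons, List.map_nil, List.sum_cons,
              List.sum_nil]
            rw [abs_of_nonneg (by linarith : (0:ℤ) ≤ y-1-qq), abs_of_nonneg (by norm_num :
              (0:ℤ) ≤ 1), abs_of_nonneg hqq0]
            linarith
    · -- c < 0 : family R
      obtain ⟨u, v, n, e, hu0, hu1, hv0, hv1, hn0, hn1, he0, he1, heq⟩ :=
        COV x y al be (-c) hx hy ha hb (by linarith) (by linarith)
      refine ⟨[-u, y+v-n, e, n, x+u-e, -v], by simp, by simp, ?_, ?_, ?_, ?_, ?_⟩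
      · simp only [Xb, evens, odds, List.sum_cons, List.sum_nil]; ring
      · simp only [Yb, evens, odds, List.sum_cons, List.sum_nil]; ring
      · simp only [Cb, evens, odds, cc, List.sum_cons, List.sum_nil, List.tail_cons]
        linear_combination heq
      · simp only [evens, odds, absum, List.map_cons, List.map_nil, List.sum_cons, List.sum_nil]
        rw [abs_neg, abs_of_nonneg hu0, abs_of_nonneg he0,
          abs_of_nonneg (by linarith : (0:ℤ) ≤ x+u-e)]
        linarith
      · simp only [evens, odds, absum, List.map_cons, List.map_nil, List.sum_cons, List.sum_nil]
        rw [abs_of_nonneg (by linarith : (0:ℤ) ≤ y+v-n), abs_of_nonneg hn0, abs_neg,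
          abs_of_nonneg hv0]
        linarith

theorem cover_neg (x y' c al be : ℤ) (hx : 0 ≤ x) (hy : 0 ≤ y') (ha : 0 ≤ al) (hb : 0 ≤ be)
    (hlo : -(x*y' + be*x + al*y' + al*be) ≤ c) (hhi : c ≤ be*x + al*y' + al*be) :
    ∃ P : List ℤ, P ≠ [] ∧ P.length ≤ 7 ∧ Xb P = x ∧ Yb P = -y' ∧ Cb P = c ∧
      absum (evens P) ≤ x + 2*al ∧ absum (odds P) ≤ y' + 2*be := by
  rcases lt_or_ge 0 c with hc1 | hc1
  · -- c > 0 : family M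
    obtain ⟨u, v, n, e, hu0, hu1, hv0, hv1, hn0, hn1, he0, he1, heq⟩ :=
      COV x y' al be c hx hy ha hb (by linarith) (by linarith)
    refine ⟨[-u, -(y'+v-n), e, -n, x+u-e, v], by simp, by simp, ?_, ?_, ?_, ?_, ?_⟩
    · simp only [Xb, evens, odds, List.sum_cons, List.sum_nil]; ring
    · simp only [Yb, evens, odds, List.sum_cons, List.sum_nil]; ring
    · simp only [Cb, evens, odds, cc, List.sum_cons, List.sum_nil, List.tail_cons]
      linear_combination -heq
    · simp only [evens, odds, absum, List.map_cons, List.map_nil, List.sum_cons, List.sum_nil]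
      rw [abs_neg, abs_of_nonneg hu0, abs_of_nonneg he0,
        abs_of_nonneg (by linarith : (0:ℤ) ≤ x+u-e)]
      linarith
    · simp only [evens, odds, absum, List.map_cons, List.map_nil, List.sum_cons, List.sum_nil]
      rw [abs_neg, abs_of_nonneg (by linarith : (0:ℤ) ≤ y'+v-n), abs_neg, abs_of_nonneg hn0,
        abs_of_nonneg hv0]
      linarith
  · rcases le_or_gt (-(x*y')) c with hc2 | hc2
    · -- -x*y' ≤ c ≤ 0 : negative staircase
      rcases eq_or_lt_of_le hx with hx0 | hx0
      · have hc0 : c = 0 := by nlinarith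
        refine ⟨[0, -y'], by simp, by simp, ?_, ?_, ?_, ?_, ?_⟩
        · simp only [Xb, evens, odds, List.sum_cons, List.sum_nil]; omega
        · simp only [Yb, evens, odds, List.sum_cons, List.sum_nil]; ring
        · simp only [Cb, evens, odds, cc, List.sum_cons, List.sum_nil, List.tail_cons]
          omega
        · simp only [evens, odds, absum, List.map_cons, List.map_nil, List.sum_cons,
            List.sum_nil]
          simp; linarith
        · simp only [evens, odds, absum, List.map_cons, List.map_nil, List.sum_cons,
            List.sum_nil]
          rw [abs_neg, abs_of_nonneg hy]; linarith
      · rcases eq_or_lt_of_le hc2 with hcxy | hcxy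
        · refine ⟨[x, -y'], by simp, by simp, ?_, ?_, ?_, ?_, ?_⟩
          · simp only [Xb, evens, odds, List.sum_cons, List.sum_nil]; ring
          · simp only [Yb, evens, odds, List.sum_cons, List.sum_nil]; ring
          · simp only [Cb, evens, odds, cc, List.sum_cons, List.sum_nil, List.tail_cons]
            linear_combination hcxy
          · simp only [evens, odds, absum, List.map_cons, List.map_nil, List.sum_cons,
              List.sum_nil]
            rw [abs_of_nonneg hx]; linarith
          · simp only [evens, odds, absum, List.map_cons, List.map_nil, List.sum_cons,
              List.sum_nil]
            rw [abs_neg, abs_of_nonneg hy]; linarith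
        · -- -x*y' < c ≤ 0
          set D := -c with hDdef
          have hD0 : 0 ≤ D := by omega
          set qq := D / x with hqdef
          have hdm := Int.mul_ediv_add_emod D x
          have hr0 : 0 ≤ D % x := Int.emod_nonneg _ (by omega)
          have hr1 : D % x < x := Int.emod_lt_of_pos _ (by omega)
          have hqq0 : 0 ≤ qq := Int.ediv_nonneg hD0 (by omega)
          have hqqy : qq ≤ y' - 1 := by
            by_contra hcon
            push_neg at hcon
            have h2 : x * y' ≤ x * qq := mul_le_mul_of_nonneg_left (by omega) (by omega)
            rw [← hqdef] at hdm
            have : D < x * y' := by omega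
            linarith
          refine ⟨[0, -(y'-1-qq), D % x, -1, x - D % x, -qq], by simp, by simp,
            ?_, ?_, ?_, ?_, ?_⟩
          · simp only [Xb, evens, odds, List.sum_cons, List.sum_nil]; ring
          · simp only [Yb, evens, odds, List.sum_cons, List.sum_nil]; ring
          · simp only [Cb, evens, odds, cc, List.sum_cons, List.sum_nil, List.tail_cons]
            rw [← hqdef] at hdm
            have hceq : c = -D := by omega
            rw [hceq]
            linear_combination -hdm
          · simp only [evens, odds, absum, List.map_cons, List.map_nil, List.sum_cons,
              List.sum_nil]
            rw [abs_of_nonneg (le_refl (0:ℤ)), abs_of_nonneg hr0,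
              abs_of_nonneg (by linarith : (0:ℤ) ≤ x - D % x)]
            linarith
          · simp only [evens, odds, absum, List.map_cons, List.map_nil, List.sum_cons,
              List.sum_nil]
            rw [abs_neg, abs_of_nonneg (by linarith : (0:ℤ) ≤ y'-1-qq), abs_neg,
              abs_of_nonneg (by norm_num : (0:ℤ) ≤ 1), abs_neg, abs_of_nonneg hqq0]
            linarith
    · -- c < -x*y' : family MR
      obtain ⟨u, v, n, e, hu0, hu1, hv0, hv1, hn0, hn1, he0, he1, heq⟩ :=
        COV x y' al be (-c - x*y') hx hy ha hb (by linarith) (by linarith)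
      refine ⟨[0, v, x+u-e, -n, e, -(y'+v-n), -u], by simp, by simp, ?_, ?_, ?_, ?_, ?_⟩
      · simp only [Xb, evens, odds, List.sum_cons, List.sum_nil]; ring
      · simp only [Yb, evens, odds, List.sum_cons, List.sum_nil]; ring
      · simp only [Cb, evens, odds, cc, List.sum_cons, List.sum_nil, List.tail_cons]
        linear_combination heq
      · simp only [evens, odds, absum, List.map_cons, List.map_nil, List.sum_cons, List.sum_nil]
        rw [abs_of_nonneg (le_refl (0:ℤ)), abs_of_nonneg (by linarith : (0:ℤ) ≤ x+u-e),
          abs_of_nonneg he0, abs_neg, abs_of_nonneg hu0]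
        linarith
      · simp only [evens, odds, absum, List.map_cons, List.map_nil, List.sum_cons, List.sum_nil]
        rw [abs_of_nonneg hv0, abs_neg, abs_of_nonneg hn0, abs_neg,
          abs_of_nonneg (by linarith : (0:ℤ) ≤ y'+v-n)]
        linarith
/-! ### Words from blocks, masses, assembly -/

def wob : List ℤ → List SLetter
  | [] => []
  | [p] => apowS p
  | p :: P => apowS p ++ SLetter.t :: wob P

theorem evalG_append (u v : List SLetter) : evalG (u ++ v) = evalG u * evalG v := by
  simp [evalG]

theorem aG_pow_nat (n : ℕ) : aG ^ n = Apow (n : ℤ) := by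
  have := aG_zpow (n : ℤ)
  rw [zpow_natCast] at this
  rw [this]; rfl

theorem aGinv_pow_nat (n : ℕ) : aG⁻¹ ^ n = Apow (-(n : ℤ)) := by
  rw [inv_pow, ← zpow_natCast, ← zpow_neg, aG_zpow]; rfl

theorem evalG_apowS (p : ℤ) : evalG (apowS p) = Apow p := by
  rcases le_or_gt 0 p with h | h
  · rw [apowS, if_pos h]
    show ((List.replicate p.toNat SLetter.a).map fSG).prod = _
    rw [List.map_replicate, List.prod_replicate]
    show aG ^ p.toNat = _
    rw [aG_pow_nat, Int.toNat_of_nonneg h]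
  · rw [apowS, if_neg (by omega)]
    show ((List.replicate (-p).toNat SLetter.A).map fSG).prod = _
    rw [List.map_replicate, List.prod_replicate]
    show aG⁻¹ ^ (-p).toNat = _
    rw [aGinv_pow_nat]
    congr 1
    omega

theorem evalG_wob : ∀ P : List ℤ, evalG (wob P) = gval P := by
  intro P
  induction P with
  | nil => rfl
  | cons p P ih =>
      rcases P with _ | ⟨q, Q⟩
      · show evalG (apowS p) = Apow p
        exact evalG_apowS p
      · show evalG (apowS p ++ SLetter.t :: wob (q :: Q)) = Apow p * tG * gval (q :: Q)
        rw [evalG_append, evalG_apowS]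
        have : evalG (SLetter.t :: wob (q :: Q)) = tG * evalG (wob (q :: Q)) := by
          simp [evalG, fSG]
        rw [this, ih, mul_assoc]

theorem apowS_length (p : ℤ) : ((apowS p).length : ℤ) = |p| := by
  rcases le_or_gt 0 p with h | h
  · rw [apowS, if_pos h, List.length_replicate, abs_of_nonneg h]; omega
  · rw [apowS, if_neg (by omega), List.length_replicate, abs_of_neg h]; omega

theorem apowS_no_t (p : ℤ) : (apowS p).count SLetter.t = 0 := by
  rcases le_or_gt 0 p with h | h
  · rw [apowS, if_pos h]
    simp [List.count_replicate]
  · rw [apowS, if_neg (by omega)]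
    simp [List.count_replicate]

theorem wob_length : ∀ P : List ℤ, P ≠ [] →
    ((wob P).length : ℤ) = absum P + (P.length : ℤ) - 1 := by
  intro P
  induction P with
  | nil => intro h; exact absurd rfl h
  | cons p P ih =>
      intro _
      rcases P with _ | ⟨q, Q⟩
      · show ((apowS p).length : ℤ) = absum [p] + 1 - 1
        rw [apowS_length]; simp [absum]
      · show ((apowS p ++ SLetter.t :: wob (q :: Q)).length : ℤ) = _
        rw [List.length_append, List.length_cons]
        push_cast
        rw [apowS_length, ih (by simp)]
        simp only [absum, List.map_cons, List.sum_cons, List.length_cons]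
        push_cast
        ring

theorem blocks_mass : ∀ w : List SLetter,
    absum (blocks w) + (w.count SLetter.t : ℤ) ≤ (w.length : ℤ) := by
  intro w
  induction w with
  | nil => simp [blocks, absum]
  | cons l w ih =>
      cases l
      · rcases h : blocks w with _ | ⟨p, P⟩
        · exact absurd h (blocks_ne_nil w)
        · simp only [blocks, h]
          rw [h] at ih
          simp only [absum, List.map_cons, List.sum_cons] at ih ⊢
          have h1 : |p + 1| ≤ |p| + 1 := by
            calc |p + 1| ≤ |p| + |(1:ℤ)| := abs_add_le _ _
            _ = |p| + 1 := by norm_num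
          have hc : (SLetter.a :: w).count SLetter.t = w.count SLetter.t := by
            rw [List.count_cons]; simp
          rw [hc]
          simp only [List.length_cons]
          push_cast
          linarith
      · rcases h : blocks w with _ | ⟨p, P⟩
        · exact absurd h (blocks_ne_nil w)
        · simp only [blocks, h]
          rw [h] at ih
          simp only [absum, List.map_cons, List.sum_cons] at ih ⊢
          have h1 : |p - 1| ≤ |p| + 1 := by
            calc |p - 1| ≤ |p| + |(-1:ℤ)| := abs_sub _ _
            _ = |p| + 1 := by norm_num
          have hc : (SLetter.A :: w).count SLetter.t = w.count SLetter.t := by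
            rw [List.count_cons]; simp
          rw [hc]
          simp only [List.length_cons]
          push_cast
          linarith
      · simp only [blocks]
        simp only [absum, List.map_cons, List.sum_cons]
        have hc : (SLetter.t :: w).count SLetter.t = w.count SLetter.t + 1 := by
          rw [List.count_cons]; simp
        rw [hc]
        simp only [List.length_cons, absum] at ih ⊢
        push_cast
        simp only [abs_zero]
        linarith

theorem blocks_length : ∀ w : List SLetter, (blocks w).length = w.count SLetter.t + 1 := by
  intro w
  induction w with
  | nil => simp [blocks]
  | cons l w ih =>
      cases l
      · rcases h : blocks w with _ | ⟨p, P⟩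
        · exact absurd h (blocks_ne_nil w)
        · simp only [blocks, h]
          rw [h] at ih
          simp only [List.length_cons] at ih ⊢
          rw [List.count_cons]
          simp [ih]
      · rcases h : blocks w with _ | ⟨p, P⟩
        · exact absurd h (blocks_ne_nil w)
        · simp only [blocks, h]
          rw [h] at ih
          simp only [List.length_cons] at ih ⊢
          rw [List.count_cons]
          simp [ih]
      · simp only [blocks, List.length_cons, ih, List.count_cons]
        simp

theorem mass_split : ∀ P : List ℤ, absum (evens P) + absum (odds P) = absum P := by
  intro P
  induction P with
  | nil => simp [evens, odds, absum]
  | cons p P ih =>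
      simp only [evens, odds, absum, List.map_cons, List.sum_cons]
      simp only [absum] at ih
      linarith

theorem len_odds_le : ∀ P : List ℤ,
    (odds P).length ≤ (evens P).length ∧ (evens P).length ≤ (odds P).length + 1 := by
  intro P
  induction P with
  | nil => simp [evens, odds]
  | cons p P ih =>
      simp only [evens, odds, List.length_cons]
      omega

theorem absum_decomp : ∀ l : List ℤ, ∃ k : ℤ, 0 ≤ k ∧ absum l = l.sum + 2*k := by
  intro l
  induction l with
  | nil => exact ⟨0, le_rfl, by simp [absum]⟩
  | cons e l ih =>
      obtain ⟨k, hk, hek⟩ := ih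
      simp only [absum, List.map_cons, List.sum_cons] at *
      rcases abs_cases e with ⟨h1, h2⟩ | ⟨h1, h2⟩
      · exact ⟨k, hk, by omega⟩
      · exact ⟨k - e, by omega, by omega⟩

theorem ev_od_map_neg : ∀ P : List ℤ,
    evens (P.map (fun z => -z)) = (evens P).map (fun z => -z) ∧
    odds (P.map (fun z => -z)) = (odds P).map (fun z => -z) := by
  intro P
  induction P with
  | nil => simp [evens, odds]
  | cons p P ih =>
      constructor
      · show evens ((-p) :: P.map _) = _
        simp only [evens, List.map_cons]
        rw [ih.2]
      · show odds ((-p) :: P.map _) = _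
        simp only [odds]
        exact ih.1

theorem cc_neg_left (E O : List ℤ) : cc (E.map (fun z => -z)) O = - cc E O := by
  induction E generalizing O with
  | nil => simp [cc]
  | cons e E ih =>
      simp only [List.map_cons, cc, ih]
      ring

theorem absum_map_neg (l : List ℤ) : absum (l.map (fun z => -z)) = absum l := by
  simp only [absum, List.map_map]
  congr 1
  apply List.map_congr_left
  intro z _
  simp [abs_neg]
/-! ### Bridge -/

theorem bridge_pos (E O : List ℤ) (hlen : O.length ≤ E.length) (hx : 0 ≤ E.sum) :
    ∃ P, P ≠ [] ∧ P.length ≤ 7 ∧ Xb P = E.sum ∧ Yb P = O.sum ∧ Cb P = cc E O ∧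
      absum (evens P) ≤ absum E ∧ absum (odds P) ≤ absum O := by
  obtain ⟨al, hal, hA⟩ := absum_decomp E
  obtain ⟨bd, hbd, hB⟩ := absum_decomp O
  have hup := cbound_upper E O hlen hx
  have hlo := cbound_lower E O hlen hx
  rcases le_or_gt 0 O.sum with hy | hy
  · rw [abs_of_nonneg hy] at hup hlo
    rw [hA, hB] at hup hlo
    obtain ⟨P, h1, h2, h3, h4, h5, h6, h7⟩ :=
      cover_pos E.sum O.sum (cc E O) al bd hx hy hal hbd
        (by ring_nf at hlo ⊢; linarith) (by ring_nf at hup ⊢; linarith)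
    exact ⟨P, h1, h2, h3, h4, h5, by rw [hA]; linarith, by rw [hB]; linarith⟩
  · rw [abs_of_neg hy] at hup hlo
    have hbd2 : 0 ≤ bd + O.sum := by
      have := abs_sum_le_absum O
      rw [abs_of_neg hy] at this
      linarith
    rw [hA, hB] at hup hlo
    obtain ⟨P, h1, h2, h3, h4, h5, h6, h7⟩ :=
      cover_neg E.sum (-O.sum) (cc E O) al (bd + O.sum) hx (by linarith) hal hbd2
        (by ring_nf at hlo ⊢; linarith) (by ring_nf at hup ⊢; linarith)
    refine ⟨P, h1, h2, h3, by rw [h4]; ring, h5, by rw [hA]; linarith, by rw [hB]; linarith⟩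

theorem bridge (E O : List ℤ) (hlen : O.length ≤ E.length) :
    ∃ P, P ≠ [] ∧ P.length ≤ 7 ∧ Xb P = E.sum ∧ Yb P = O.sum ∧ Cb P = cc E O ∧
      absum (evens P) ≤ absum E ∧ absum (odds P) ≤ absum O := by
  rcases le_or_gt 0 E.sum with hx | hx
  · exact bridge_pos E O hlen hx
  · obtain ⟨P0, h1, h2, h3, h4, h5, h6, h7⟩ :=
      bridge_pos (E.map (fun z => -z)) (O.map (fun z => -z))
        (by simpa using hlen) (by rw [sum_map_neg]; linarith)
    refine ⟨P0.map (fun z => -z), by simpa using h1, by simpa using h2, ?_, ?_, ?_, ?_, ?_⟩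
    · rw [Xb, (ev_od_map_neg P0).1, sum_map_neg]
      rw [Xb] at h3
      rw [sum_map_neg] at h3
      linarith
    · rw [Yb, (ev_od_map_neg P0).2, sum_map_neg]
      rw [Yb] at h4
      rw [sum_map_neg] at h4
      linarith
    · rw [Cb, (ev_od_map_neg P0).1, (ev_od_map_neg P0).2, cc_neg_left, cc_neg_right]
      rw [Cb] at h5
      rw [cc_neg_right] at h5
      have : cc (E.map (fun z => -z)) O = - cc E O := cc_neg_left E O
      rw [cc_neg_left] at h5
      linarith
    · rw [(ev_od_map_neg P0).1, absum_map_neg]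
      rw [absum_map_neg] at h6
      exact h6
    · rw [(ev_od_map_neg P0).2, absum_map_neg]
      rw [absum_map_neg] at h7
      exact h7

theorem mul_tG (a b c : ℤ) (e : Bool) : (⟨(a,b,c), e⟩ : G) * tG = ⟨(a,b,c), !e⟩ := by
  cases e <;> (apply G.ext <;> first | rfl | (show _ = _ ; simp [G.mul_def, hmul, tw, hphi, tG]))

theorem evalS_eq_of_evalG {w w' : List SLetter} (h : evalG w' = evalG w) :
    evalS w' = evalS w :=
  piG_inj (by rw [piG_evalS, piG_evalS, h])

theorem shorten (w : List SLetter) (hk : 8 ≤ w.count SLetter.t) :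
    ∃ w' : List SLetter, evalS w' = evalS w ∧ w'.length < w.length := by
  have hPne := blocks_ne_nil w
  have hg : evalG w = ⟨(Xb (blocks w), Yb (blocks w), Cb (blocks w)), parb (blocks w)⟩ := by
    rw [evalG_blocks, gval_eq _ hPne]
  obtain ⟨P', hne, h7, hX, hY, hC, hmE, hmO⟩ :=
    bridge (evens (blocks w)) (odds (blocks w)) (len_odds_le (blocks w)).1
  have hXw : Xb P' = Xb (blocks w) := hX
  have hYw : Yb P' = Yb (blocks w) := hY
  have hCw : Cb P' = Cb (blocks w) := hC
  have l1 := wob_length P' hne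
  have l2 := blocks_mass w
  have l3 := mass_split P'
  have l4 := mass_split (blocks w)
  have l5 : absum P' ≤ absum (blocks w) := by rw [← l3, ← l4]; linarith
  have l7 : (P'.length : ℤ) ≤ 7 := by exact_mod_cast h7
  have l8 : (8 : ℤ) ≤ (w.count SLetter.t : ℤ) := by exact_mod_cast hk
  by_cases hpar : parb P' = parb (blocks w)
  · refine ⟨wob P', ?_, ?_⟩
    · apply evalS_eq_of_evalG
      rw [evalG_wob, gval_eq _ hne, hXw, hYw, hCw, hpar, hg]
    · have hlt : ((wob P').length : ℤ) < (w.length : ℤ) := by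
        rw [l1]; linarith
      exact_mod_cast hlt
  · refine ⟨wob P' ++ [SLetter.t], ?_, ?_⟩
    · apply evalS_eq_of_evalG
      rw [evalG_append, evalG_wob, gval_eq _ hne, hXw, hYw, hCw]
      have ht : evalG [SLetter.t] = tG := by simp [evalG, fSG]
      rw [ht, mul_tG, hg]
      have : (!parb P') = parb (blocks w) := by
        cases h1 : parb P' <;> cases h2 : parb (blocks w) <;> simp_all
      rw [this]
  
    · have hlt : (((wob P' ++ [SLetter.t])).length : ℤ) < (w.length : ℤ) := by
        rw [List.length_append, List.length_cons, List.length_nil]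
        push_cast
        rw [l1]
        linarith
      exact_mod_cast hlt


/-- If `w` is a geodesic word over `S = {a, a⁻¹, t}` for the group `Ĥ`,
then `w` contains at most 7 instances of the letter `t`. -/
theorem geodesic_at_most_seven_t (w : List SLetter) (hw : IsGeodesicS w) :
    w.count SLetter.t ≤ 7 := by
  by_contra hcon
  push_neg at hcon
  obtain ⟨w', hval, hlt⟩ := shorten w (by omega)
  have hmem : w'.length ∈ {n | ∃ u : List SLetter, evalS u = evalS w ∧ u.length = n} :=
    ⟨w', hval, rfl⟩
  have hle : lenS (evalS w) ≤ w'.length := Nat.sInf_le hmem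
  rw [IsGeodesicS] at hw
  omega
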